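/- arXiv:1406.3272 — 5 statements merged into one kernel-verified Lean document; each statement's English description precedes it below -/
import Mathlib

section
/- Let R be a Noetherian commutative ring, I ⊆ R a finitely generated ideal, and M a flat R-module such that M/IM is a projective R/I-module. Then the I-adic completion of M is a flat R-module. -/
open TensorProduct

universe u v w

namespace AdicFlatProofAux

open LinearMap

variable {R : Type u} [CommRing R]

section Combo

variable {M : Type v} [AddCommGroup M] [Module R M]

/-- The linear map `(ν → M) → M` given by `v ↦ ∑ i, f i • v i`. -/
noncomputable def combo {ν : Type*} [Fintype ν] (f : ν → R) : (ν → M) →ₗ[R] M :=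
  ∑ i, f i • LinearMap.proj i

lemma combo_apply {ν : Type*} [Fintype ν] (f : ν → R) (v : ν → M) :
    combo f v = ∑ i, f i • v i := by
  simp [combo]

lemma comp_mem_of_smul_top {ν : Type*} (J : Ideal R) {a : ν → M}
    (ha : a ∈ J • (⊤ : Submodule R (ν → M))) (i : ν) : a i ∈ J • (⊤ : Submodule R M) := by
  refine Submodule.smul_induction_on ha (fun r hr x _ ↦ ?_) (fun x y hx hy ↦ ?_)
  · simpa using Submodule.smul_mem_smul hr (Submodule.mem_top (x := x i))
  · simpa using add_mem hx hy

lemma single_mem_smul_top {ν : Type*} [DecidableEq ν] (J : Ideal R) {x : M}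
    (hx : x ∈ J • (⊤ : Submodule R M)) (i : ν) :
    Pi.single i x ∈ J • (⊤ : Submodule R (ν → M)) := by
  refine Submodule.smul_induction_on hx (fun r hr y _ ↦ ?_) (fun y z hy hz ↦ ?_)
  · rw [Pi.single_smul]
    exact Submodule.smul_mem_smul hr Submodule.mem_top
  · rw [Pi.single_add]
    exact add_mem hy hz

lemma smul_top_self (J : Ideal R) : J • (⊤ : Submodule R R) = J := by
  apply le_antisymm
  · rw [Submodule.smul_le]
    intro r hr n _
    simpa [smul_eq_mul] using J.mul_mem_right n hr
  · intro x hx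
    have := Submodule.smul_mem_smul hx (Submodule.mem_top (x := (1 : R)))
    simpa using this

lemma swap_sum {κ : Type*} [Fintype κ] {c : ℕ} (g : Fin c → R) (b : κ → Fin c → R)
    (mm : κ → M) :
    ∑ j, g j • (∑ t, b t j • mm t) = ∑ t, (∑ j, g j * b t j) • mm t := by
  simp_rw [Finset.smul_sum, smul_smul]
  rw [Finset.sum_comm]
  simp_rw [← Finset.sum_smul]

end Combo

/-- Artin–Rees-type statement on the ring side. -/
lemma rside {A : Type u} {B : Type u} [AddCommGroup A] [Module R A] [AddCommGroup B] [Module R B]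
    [IsNoetherianRing R] [Module.Finite R B] (G : A →ₗ[R] B) (I : Ideal R) :
    ∃ k : ℕ, ∀ n, k ≤ n → ∀ a : A, G a ∈ (I ^ n • ⊤ : Submodule R B) →
      a ∈ LinearMap.ker G ⊔ (I ^ (n - k) • ⊤ : Submodule R A) := by
  obtain ⟨k, hk⟩ := Ideal.exists_pow_inf_eq_pow_smul I (LinearMap.range G)
  refine ⟨k, fun n hn a ha ↦ ?_⟩
  have h1 : G a ∈ I ^ (n - k) • LinearMap.range G := by
    have hmem : G a ∈ (I ^ n • ⊤ : Submodule R B) ⊓ LinearMap.range G := ⟨ha, ⟨a, rfl⟩⟩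
    rw [hk n hn] at hmem
    exact (smul_mono_right (I ^ (n - k)) inf_le_right :
      I ^ (n - k) • ((I ^ k • ⊤ : Submodule R B) ⊓ LinearMap.range G)
        ≤ I ^ (n - k) • LinearMap.range G) hmem
  rw [← Submodule.map_top, ← Submodule.map_smul''] at h1
  obtain ⟨a', ha', haa⟩ := Submodule.mem_map.mp h1
  refine Submodule.mem_sup.mpr ⟨a - a', ?_, a', ha', by abel⟩
  rw [LinearMap.mem_ker, map_sub, haa, sub_self]


section Tensor

variable (I : Ideal R) {M : Type v} [AddCommGroup M] [Module R M]

lemma map_rid_range_lTensor_subtype (J : Ideal R) :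
    Submodule.map (TensorProduct.rid R M).toLinearMap
      (LinearMap.range (lTensor M (Submodule.subtype (J : Submodule R R))))
      = J • (⊤ : Submodule R M) := by
  apply le_antisymm
  · intro x hx
    obtain ⟨z, hz, rfl⟩ := Submodule.mem_map.mp hx
    obtain ⟨ww, rfl⟩ := LinearMap.mem_range.mp hz
    clear hx hz
    induction ww using TensorProduct.induction_on with
    | zero => simpa using Submodule.zero_mem _
    | tmul m r => simpa using Submodule.smul_mem_smul r.2 (Submodule.mem_top (x := m))
    | add x y hx hy =>
        rw [map_add, map_add]
        exact add_mem hx hy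
  · rw [Submodule.smul_le]
    intro r hr m _
    refine Submodule.mem_map.mpr
      ⟨lTensor M (Submodule.subtype (J : Submodule R R)) (m ⊗ₜ ⟨r, hr⟩), ⟨_, rfl⟩, ?_⟩
    simp

lemma map_piScalarRight_range_lTensor_subtype {ν : Type w} [Fintype ν] [DecidableEq ν]
    (J : Ideal R) :
    Submodule.map (TensorProduct.piScalarRight R R M ν).toLinearMap
      (LinearMap.range (lTensor M (Submodule.subtype (J • (⊤ : Submodule R (ν → R))))))
      = Submodule.pi Set.univ (fun _ : ν ↦ J • (⊤ : Submodule R M)) := by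
  apply le_antisymm
  · intro x hx
    obtain ⟨z, hz, rfl⟩ := Submodule.mem_map.mp hx
    obtain ⟨ww, rfl⟩ := LinearMap.mem_range.mp hz
    clear hx hz
    induction ww using TensorProduct.induction_on with
    | zero => simpa using Submodule.zero_mem _
    | tmul m a =>
        refine Submodule.mem_pi.mpr fun i _ ↦ ?_
        have hai : a.1 i ∈ J := by
          have := comp_mem_of_smul_top (M := R) J a.2 i
          rwa [smul_top_self] at this
        simpa using Submodule.smul_mem_smul hai (Submodule.mem_top (x := m))
    | add x y hx hy =>
        rw [map_add, map_add]
        exact add_mem hx hy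
  · intro vv hvv
    have hv : vv = ∑ i, Pi.single i (vv i) := by
      funext j
      rw [Finset.sum_apply]
      simp [Pi.single_apply]
    rw [hv]
    apply Submodule.sum_mem
    intro i _
    have hvi : vv i ∈ J • (⊤ : Submodule R M) := hvv i (Set.mem_univ i)
    refine Submodule.smul_induction_on hvi (fun r hr x _ ↦ ?_) (fun x y hx hy ↦ ?_)
    · have hmem : Pi.single i r ∈ J • (⊤ : Submodule R (ν → R)) := by
        refine single_mem_smul_top J ?_ i
        rw [smul_top_self]
        exact hr
      refine Submodule.mem_map.mpr
        ⟨lTensor M (Submodule.subtype (J • (⊤ : Submodule R (ν → R))))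
          (x ⊗ₜ ⟨Pi.single i r, hmem⟩), ⟨_, rfl⟩, ?_⟩
      simp only [lTensor_tmul, Submodule.coe_subtype, LinearEquiv.coe_coe,
        TensorProduct.piScalarRight_apply, TensorProduct.piScalarRightHom_tmul]
      funext j
      by_cases h : j = i
      · subst h; simp
      · simp [Pi.single_apply, h]
    · rw [Pi.single_add]
      exact add_mem hx hy

variable [Module.Flat R M]

/-- Solutions in a flat module of a linear condition come from the corresponding
solution submodule over `R`. -/
lemma sol {ν : Type} [Fintype ν] [DecidableEq ν] {B : Type*} [AddCommGroup B] [Module R B]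
    (G : (ν → R) →ₗ[R] B) (T : Submodule R B) (v : ν → M)
    (hv : lTensor M G ((TensorProduct.piScalarRight R R M ν).symm v)
      ∈ LinearMap.range (lTensor M T.subtype)) :
    ∃ (κ : Type (max u v)) (_ : Fintype κ) (mm : κ → M) (bb : κ → (ν → R)),
      (∀ t, G (bb t) ∈ T) ∧ ∀ i, v i = ∑ t, bb t i • mm t := by
  classical
  set G' : (ν → R) →ₗ[R] B ⧸ T := T.mkQ ∘ₗ G with hG'
  obtain ⟨z, hz⟩ := LinearMap.mem_range.mp hv
  have h0 : lTensor M G' ((TensorProduct.piScalarRight R R M ν).symm v) = 0 := by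
    rw [hG', lTensor_comp, LinearMap.comp_apply, ← hz, ← LinearMap.comp_apply, ← lTensor_comp]
    have hcomp : T.mkQ ∘ₗ T.subtype = 0 := by
      ext x
      simpa using x.2
    rw [hcomp, lTensor_zero, LinearMap.zero_apply]
  have hexact := Module.Flat.lTensor_exact M (LinearMap.exact_subtype_ker_map G')
  obtain ⟨w, hw⟩ := (hexact _).mp h0
  obtain ⟨S, hS⟩ := TensorProduct.exists_finset w
  refine ⟨{x // x ∈ S}, inferInstance, fun t ↦ t.1.1, fun t ↦ (t.1.2 : ν → R),
    fun t ↦ ?_, fun i ↦ ?_⟩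
  · have ht : (t.1.2 : ν → R) ∈ LinearMap.ker G' := t.1.2.2
    have h1 : T.mkQ (G (t.1.2 : ν → R)) = 0 := ht
    rwa [Submodule.mkQ_apply, Submodule.Quotient.mk_eq_zero] at h1
  · have hv' : v = (TensorProduct.piScalarRight R R M ν)
        (lTensor M (LinearMap.ker G').subtype w) := by
      rw [hw, LinearEquiv.apply_symm_apply]
    have hfin : (TensorProduct.piScalarRight R R M ν)
        (lTensor M (LinearMap.ker G').subtype w)
        = fun i ↦ ∑ t ∈ S.attach, ((t.1.2 : ν → R)) i • t.1.1 := by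
      rw [hS, ← Finset.sum_attach S (fun p ↦ p.1 ⊗ₜ[R] p.2), map_sum, map_sum]
      funext i
      rw [Finset.sum_apply]
      apply Finset.sum_congr rfl
      intro p _
      simp
    rw [hv', hfin, Finset.univ_eq_attach]

/-- Approximate division with remainder in a flat module. -/
lemma factA [IsNoetherianRing R] {ι : Type} [Fintype ι] [DecidableEq ι]
    (f : ι → R) {c : ℕ} (k : Fin c → ι → R)
    (hk : Submodule.span R (Set.range k) = LinearMap.ker (combo (M := R) f)) :
    ∃ K : ℕ, ∀ n, K ≤ n → ∀ v : ι → M,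
      (∑ i, f i • v i) ∈ (I ^ n • ⊤ : Submodule R M) →
      ∃ (y : Fin c → M) (w : ι → M),
        (∀ i, v i = (∑ j, k j i • y j) + w i) ∧
        ∀ i, w i ∈ (I ^ (n - K) • ⊤ : Submodule R M) := by
  classical
  obtain ⟨K, hK⟩ := rside (combo (M := R) f) I
  refine ⟨K, fun n hn v hv ↦ ?_⟩
  have hnatmap : (TensorProduct.rid R M).toLinearMap ∘ₗ lTensor M (combo (M := R) f)
      = (combo (M := M) f) ∘ₗ (TensorProduct.piScalarRight R R M ι).toLinearMap := by
    apply TensorProduct.ext'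
    intro x a
    simp only [LinearMap.coe_comp, Function.comp_apply, lTensor_tmul, LinearEquiv.coe_coe,
      TensorProduct.rid_tmul, TensorProduct.piScalarRight_apply,
      TensorProduct.piScalarRightHom_tmul, combo_apply]
    rw [Finset.sum_smul]
    apply Finset.sum_congr rfl
    intro i _
    rw [smul_eq_mul, mul_smul]
  have hnat : (TensorProduct.rid R M)
      (lTensor M (combo (M := R) f) ((TensorProduct.piScalarRight R R M ι).symm v))
      = ∑ i, f i • v i := by
    have h := LinearMap.congr_fun hnatmap ((TensorProduct.piScalarRight R R M ι).symm v)
    simp only [LinearMap.coe_comp, Function.comp_apply, LinearEquiv.coe_coe,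
      LinearEquiv.apply_symm_apply] at h
    rw [h, combo_apply]
  have hconv : lTensor M (combo (M := R) f) ((TensorProduct.piScalarRight R R M ι).symm v)
      ∈ LinearMap.range (lTensor M (Submodule.subtype ((I ^ n : Ideal R) : Submodule R R))) := by
    have hmem : (TensorProduct.rid R M)
        (lTensor M (combo (M := R) f) ((TensorProduct.piScalarRight R R M ι).symm v))
        ∈ Submodule.map (TensorProduct.rid R M).toLinearMap
          (LinearMap.range (lTensor M
            (Submodule.subtype ((I ^ n : Ideal R) : Submodule R R)))) := by
      rw [map_rid_range_lTensor_subtype, hnat]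
      exact hv
    obtain ⟨z, hz, hze⟩ := Submodule.mem_map.mp hmem
    have hzz : z = lTensor M (combo (M := R) f)
        ((TensorProduct.piScalarRight R R M ι).symm v) :=
      (TensorProduct.rid R M).injective hze
    rwa [← hzz]
  obtain ⟨κ, _, mm, bb, hbT, hrep⟩ := sol (combo (M := R) f) ((I ^ n : Ideal R)) v hconv
  have hsplit : ∀ t, bb t ∈ LinearMap.ker (combo (M := R) f)
      ⊔ (I ^ (n - K) • ⊤ : Submodule R (ι → R)) := by
    intro t
    refine hK n hn (bb t) ?_
    rw [smul_top_self]
    exact hbT t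
  choose l hl e he hle using fun t ↦ Submodule.mem_sup.mp (hsplit t)
  have hspan : ∀ t, ∃ r : Fin c → R, ∑ j, r j • k j = l t := by
    intro t
    have h := hl t
    rw [← hk] at h
    exact (Submodule.mem_span_range_iff_exists_fun R).mp h
  choose r hr using hspan
  refine ⟨fun j ↦ ∑ t, r t j • mm t, fun i ↦ ∑ t, e t i • mm t, fun i ↦ ?_, fun i ↦ ?_⟩
  · rw [hrep i]
    have hbbi : ∀ t, bb t i = l t i + e t i := by
      intro t
      rw [← hle t]
      rfl
    have hli : ∀ t, l t i = ∑ j, r t j * k j i := by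
      intro t
      rw [← hr t]
      rw [Finset.sum_apply]
      apply Finset.sum_congr rfl
      intro j _
      rw [Pi.smul_apply, smul_eq_mul]
    calc ∑ t, bb t i • mm t
        = ∑ t, (l t i • mm t + e t i • mm t) := by
          apply Finset.sum_congr rfl
          intro t _
          rw [hbbi t, add_smul]
      _ = (∑ t, l t i • mm t) + ∑ t, e t i • mm t := Finset.sum_add_distrib
      _ = (∑ j, k j i • ∑ t, r t j • mm t) + ∑ t, e t i • mm t := by
          rw [swap_sum (fun j ↦ k j i) r mm]
          congr 1
          apply Finset.sum_congr rfl
          intro t _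
          rw [hli t]
          congr 1
          apply Finset.sum_congr rfl
          intro j _
          rw [mul_comm]
  · apply Submodule.sum_mem
    intro t _
    have hei : e t i ∈ (I ^ (n - K) : Ideal R) := by
      have h := comp_mem_of_smul_top (M := R) (I ^ (n - K)) (he t) i
      rwa [smul_top_self] at h
    exact Submodule.smul_mem_smul hei Submodule.mem_top

/-- Approximate syzygy correction in a flat module. -/
lemma factB [IsNoetherianRing R] {ι : Type} [Fintype ι] [DecidableEq ι]
    {c : ℕ} (k : Fin c → ι → R) :
    ∃ K : ℕ, ∀ n, K ≤ n → ∀ y : Fin c → M,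
      (∀ i, (∑ j, k j i • y j) ∈ (I ^ n • ⊤ : Submodule R M)) →
      ∃ z : Fin c → M,
        (∀ i, (∑ j, k j i • z j) = ∑ j, k j i • y j) ∧
        ∀ j, z j ∈ (I ^ (n - K) • ⊤ : Submodule R M) := by
  classical
  set Φ : (Fin c → R) →ₗ[R] (ι → R) := LinearMap.pi (fun i ↦ combo (fun j ↦ k j i)) with hΦ
  have hΦapp : ∀ (b : Fin c → R) (i : ι), Φ b i = ∑ j, k j i * b j := by
    intro b i
    rw [hΦ]
    rw [LinearMap.pi_apply, combo_apply]
    apply Finset.sum_congr rfl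
    intro j _
    rw [smul_eq_mul]
  obtain ⟨K, hK⟩ := rside Φ I
  refine ⟨K, fun n hn y hy ↦ ?_⟩
  have hnatmap : (TensorProduct.piScalarRight R R M ι).toLinearMap ∘ₗ lTensor M Φ
      = (LinearMap.pi (fun i ↦ combo (M := M) (fun j ↦ k j i))) ∘ₗ
        (TensorProduct.piScalarRight R R M (Fin c)).toLinearMap := by
    apply TensorProduct.ext'
    intro x b
    simp only [LinearMap.coe_comp, Function.comp_apply, lTensor_tmul, LinearEquiv.coe_coe,
      TensorProduct.piScalarRight_apply, TensorProduct.piScalarRightHom_tmul,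
      LinearMap.pi_apply, combo_apply]
    funext i
    rw [hΦapp b i, Finset.sum_smul, LinearMap.pi_apply, combo_apply]
    apply Finset.sum_congr rfl
    intro j _
    rw [mul_smul]
  have hnat : (TensorProduct.piScalarRight R R M ι)
      (lTensor M Φ ((TensorProduct.piScalarRight R R M (Fin c)).symm y))
      = fun i ↦ ∑ j, k j i • y j := by
    have h := LinearMap.congr_fun hnatmap ((TensorProduct.piScalarRight R R M (Fin c)).symm y)
    simp only [LinearMap.coe_comp, Function.comp_apply, LinearEquiv.coe_coe,
      LinearEquiv.apply_symm_apply] at h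
    rw [h]
    funext i
    rw [LinearMap.pi_apply, combo_apply]
  have hconv : lTensor M Φ ((TensorProduct.piScalarRight R R M (Fin c)).symm y)
      ∈ LinearMap.range (lTensor M
        (Submodule.subtype (I ^ n • (⊤ : Submodule R (ι → R))))) := by
    have hmem : (TensorProduct.piScalarRight R R M ι)
        (lTensor M Φ ((TensorProduct.piScalarRight R R M (Fin c)).symm y))
        ∈ Submodule.map (TensorProduct.piScalarRight R R M ι).toLinearMap
          (LinearMap.range (lTensor M
            (Submodule.subtype (I ^ n • (⊤ : Submodule R (ι → R)))))) := by
      rw [map_piScalarRight_range_lTensor_subtype, hnat]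
      exact Submodule.mem_pi.mpr fun i _ ↦ hy i
    obtain ⟨z, hz, hze⟩ := Submodule.mem_map.mp hmem
    have hzz : z = lTensor M Φ ((TensorProduct.piScalarRight R R M (Fin c)).symm y) :=
      (TensorProduct.piScalarRight R R M ι).injective hze
    rwa [← hzz]
  obtain ⟨κ, _, mm, bb, hbT, hrep⟩ := sol Φ (I ^ n • (⊤ : Submodule R (ι → R))) y hconv
  have hsplit : ∀ t, bb t ∈ LinearMap.ker Φ
      ⊔ (I ^ (n - K) • ⊤ : Submodule R (Fin c → R)) := fun t ↦ hK n hn (bb t) (hbT t)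
  choose l hl e he hle using fun t ↦ Submodule.mem_sup.mp (hsplit t)
  refine ⟨fun j ↦ ∑ t, e t j • mm t, fun i ↦ ?_, fun j ↦ ?_⟩
  · have h1 : ∑ j, k j i • (∑ t, e t j • mm t) = ∑ t, (Φ (e t) i) • mm t := by
      rw [swap_sum (fun j ↦ k j i) (fun t ↦ e t) mm]
      apply Finset.sum_congr rfl
      intro t _
      rw [hΦapp]
    have h2 : ∑ j, k j i • y j = ∑ t, (Φ (bb t) i) • mm t := by
      calc ∑ j, k j i • y j = ∑ j, k j i • (∑ t, bb t j • mm t) := by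
            apply Finset.sum_congr rfl
            intro j _
            rw [hrep j]
        _ = ∑ t, (∑ j, k j i * bb t j) • mm t := swap_sum (fun j ↦ k j i) (fun t ↦ bb t) mm
        _ = ∑ t, (Φ (bb t) i) • mm t := by
            apply Finset.sum_congr rfl
            intro t _
            rw [hΦapp]
    rw [h1, h2]
    apply Finset.sum_congr rfl
    intro t _
    have hb : Φ (bb t) = Φ (e t) := by
      rw [← hle t, map_add]
      have hl0 : Φ (l t) = 0 := hl t
      rw [hl0, zero_add]
    rw [hb]
  · apply Submodule.sum_mem
    intro t _
    have hej : e t j ∈ (I ^ (n - K) : Ideal R) := by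
      have h := comp_mem_of_smul_top (M := R) (I ^ (n - K)) (he t) j
      rwa [smul_top_self] at h
    exact Submodule.smul_mem_smul hej Submodule.mem_top

/-- The key lemma: relations in the adic completion of a flat module over a Noetherian ring
are trivial. -/
lemma key [IsNoetherianRing R] {ι : Type} [Fintype ι] [DecidableEq ι]
    (f : ι → R) (x : ι → AdicCompletion I M)
    (hx : ∑ i, f i • x i = 0) :
    ∃ (c : ℕ) (k : Fin c → ι → R) (y : Fin c → AdicCompletion I M),
      (∀ j, ∑ i, f i * k j i = 0) ∧ ∀ i, x i = ∑ j, k j i • y j := by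
  classical
  obtain ⟨c, k, hk⟩ := Submodule.fg_iff_exists_fin_generating_family.mp
    (IsNoetherian.noetherian (LinearMap.ker (combo (M := R) f)))
  have hkker : ∀ j, ∑ i, f i * k j i = 0 := by
    intro j
    have hmem : k j ∈ LinearMap.ker (combo (M := R) f) := by
      rw [← hk]
      exact Submodule.subset_span ⟨j, rfl⟩
    have h : combo (M := R) f (k j) = 0 := hmem
    rw [combo_apply] at h
    rw [← h]
    apply Finset.sum_congr rfl
    intro i _
    rw [smul_eq_mul]
  choose X hX using fun i ↦ AdicCompletion.mk_surjective I M (x i)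
  have hrel : ∀ n, (∑ i, f i • (X i).1 n) ∈ (I ^ n • ⊤ : Submodule R M) := by
    intro n
    have h0 : (∑ i, f i • x i).val n = 0 := by
      rw [hx]
      rfl
    rw [AdicCompletion.val_sum_apply] at h0
    have h1 : ∀ i, (f i • x i).val n
        = Submodule.mkQ (I ^ n • ⊤ : Submodule R M) (f i • (X i).1 n) := by
      intro i
      rw [AdicCompletion.val_smul_apply, ← hX i]
      rw [show (AdicCompletion.mk I M (X i)).val n
        = Submodule.mkQ (I ^ n • ⊤ : Submodule R M) ((X i).1 n) from rfl]
      rw [← map_smul]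
    rw [Finset.sum_congr rfl (fun i _ ↦ h1 i), ← map_sum] at h0
    rwa [Submodule.mkQ_apply, Submodule.Quotient.mk_eq_zero] at h0
  obtain ⟨K1, hK1⟩ := factA (M := M) I f k hk
  obtain ⟨K2, hK2⟩ := factB (M := M) I k
  have hYW : ∀ n, ∃ (y : Fin c → M) (w : ι → M),
      (∀ i, (X i).1 (n + K1) = (∑ j, k j i • y j) + w i) ∧
      ∀ i, w i ∈ (I ^ n • ⊤ : Submodule R M) := by
    intro n
    obtain ⟨y, w, h1, h2⟩ := hK1 (n + K1) (by omega)
      (fun i ↦ (X i).1 (n + K1)) (hrel (n + K1))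
    refine ⟨y, w, h1, fun i ↦ ?_⟩
    have he : n + K1 - K1 = n := by omega
    have := h2 i
    rwa [he] at this
  choose Y W hYW1 hYW2 using hYW
  have hcauchy : ∀ (i : ι) (a b : ℕ), a ≤ b →
      (X i).1 b - (X i).1 a ∈ (I ^ a • ⊤ : Submodule R M) := by
    intro i a b hab
    have h := (X i).2 hab
    rw [SModEq.sub_mem] at h
    simpa using neg_mem h
  have hYdiff : ∀ n i, (∑ j, k j i • (Y (n + 1) j - Y n j))
      ∈ (I ^ n • ⊤ : Submodule R M) := by
    intro n i
    have b1 : ∑ j, k j i • Y (n + 1) j = (X i).1 (n + 1 + K1) - W (n + 1) i := by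
      rw [hYW1 (n + 1) i]; abel
    have b0 : ∑ j, k j i • Y n j = (X i).1 (n + K1) - W n i := by
      rw [hYW1 n i]; abel
    have e1 : ∑ j, k j i • (Y (n + 1) j - Y n j)
        = ((X i).1 (n + 1 + K1) - W (n + 1) i) - ((X i).1 (n + K1) - W n i) := by
      calc ∑ j, k j i • (Y (n + 1) j - Y n j)
          = ∑ j, (k j i • Y (n + 1) j - k j i • Y n j) := by
            apply Finset.sum_congr rfl
            intro j _
            rw [smul_sub]
        _ = (∑ j, k j i • Y (n + 1) j) - ∑ j, k j i • Y n j := Finset.sum_sub_distrib _ _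
        _ = _ := by rw [b1, b0]
    rw [e1]
    have e2 : ((X i).1 (n + 1 + K1) - W (n + 1) i) - ((X i).1 (n + K1) - W n i)
        = ((X i).1 (n + 1 + K1) - (X i).1 (n + K1)) - W (n + 1) i + W n i := by abel
    rw [e2]
    refine add_mem (sub_mem ?_ ?_) ?_
    · have h := hcauchy i (n + K1) (n + 1 + K1) (by omega)
      exact Submodule.smul_mono_left (Ideal.pow_le_pow_right (by omega)) h
    · exact Submodule.smul_mono_left (Ideal.pow_le_pow_right (by omega)) (hYW2 (n + 1) i)
    · exact hYW2 n i
  have hD : ∀ n, ∃ z : Fin c → M,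
      (∀ i, (∑ j, k j i • z j) = ∑ j, k j i • (Y (n + 1) j - Y n j)) ∧
      ∀ j, z j ∈ (I ^ (n - K2) • ⊤ : Submodule R M) := by
    intro n
    by_cases hn : K2 ≤ n
    · exact hK2 n hn _ (fun i ↦ hYdiff n i)
    · refine ⟨fun j ↦ Y (n + 1) j - Y n j, fun i ↦ rfl, fun j ↦ ?_⟩
      have h0 : n - K2 = 0 := by omega
      rw [h0, pow_zero, Ideal.one_eq_top, Submodule.top_smul]
      exact Submodule.mem_top
  choose D hD1 hD2 using hD
  set U : ℕ → Fin c → M := fun n ↦ Y 0 + ∑ t ∈ Finset.range n, D t with hU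
  have hUsucc : ∀ n, U (n + 1) = U n + D n := by
    intro n
    rw [hU]
    simp only
    rw [Finset.sum_range_succ, add_assoc]
  have hU1 : ∀ n i, (∑ j, k j i • U n j) = ∑ j, k j i • Y n j := by
    intro n
    induction n with
    | zero =>
        intro i
        have h0 : U 0 = Y 0 := by
          rw [hU]
          simp
        rw [h0]
    | succ n ih =>
        intro i
        rw [hUsucc n]
        have hsub : ∑ j, k j i • (Y (n + 1) j - Y n j)
            = (∑ j, k j i • Y (n + 1) j) - ∑ j, k j i • Y n j := by
          calc ∑ j, k j i • (Y (n + 1) j - Y n j)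
              = ∑ j, (k j i • Y (n + 1) j - k j i • Y n j) := by
                apply Finset.sum_congr rfl
                intro j _
                rw [smul_sub]
            _ = _ := Finset.sum_sub_distrib _ _
        calc ∑ j, k j i • (U n + D n) j
            = ∑ j, (k j i • U n j + k j i • D n j) := by
              apply Finset.sum_congr rfl
              intro j _
              rw [Pi.add_apply, smul_add]
          _ = (∑ j, k j i • U n j) + ∑ j, k j i • D n j := Finset.sum_add_distrib
          _ = (∑ j, k j i • Y n j)
              + ((∑ j, k j i • Y (n + 1) j) - ∑ j, k j i • Y n j) := by
              rw [ih i, hD1 n i, hsub]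
          _ = ∑ j, k j i • Y (n + 1) j := by abel
  have hVc : ∀ j, AdicCompletion.IsAdicCauchy I M (fun n ↦ U (n + K2) j) := by
    intro j
    rw [AdicCompletion.isAdicCauchy_iff]
    intro n
    rw [SModEq.sub_mem]
    have hdif : U (n + K2) j - U (n + 1 + K2) j = -(D (n + K2) j) := by
      have h1 : n + 1 + K2 = (n + K2) + 1 := by omega
      rw [h1, hUsucc (n + K2)]
      rw [show (U (n + K2) + D (n + K2)) j = U (n + K2) j + D (n + K2) j from rfl]
      abel
    rw [hdif]
    refine neg_mem ?_
    have h := hD2 (n + K2) j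
    have h2 : n + K2 - K2 = n := by omega
    rwa [h2] at h
  refine ⟨c, k, fun j ↦ AdicCompletion.mk I M ⟨fun n ↦ U (n + K2) j, hVc j⟩,
    hkker, fun i ↦ ?_⟩
  rw [← hX i]
  apply AdicCompletion.ext
  intro n
  have hys : (∑ j, k j i • AdicCompletion.mk I M ⟨fun n ↦ U (n + K2) j, hVc j⟩).val n
      = Submodule.mkQ (I ^ n • ⊤ : Submodule R M) (∑ j, k j i • U (n + K2) j) := by
    rw [AdicCompletion.val_sum_apply, map_sum]
    apply Finset.sum_congr rfl
    intro j _
    rw [AdicCompletion.val_smul_apply]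
    rw [show (AdicCompletion.mk I M ⟨fun n ↦ U (n + K2) j, hVc j⟩).val n
      = Submodule.mkQ (I ^ n • ⊤ : Submodule R M) (U (n + K2) j) from rfl]
    rw [← map_smul]
  rw [hys]
  rw [show (AdicCompletion.mk I M (X i)).val n
    = Submodule.mkQ (I ^ n • ⊤ : Submodule R M) ((X i).1 n) from rfl]
  rw [Submodule.mkQ_apply, Submodule.mkQ_apply, Submodule.Quotient.eq]
  rw [hU1 (n + K2) i]
  have hstep : ∑ j, k j i • Y (n + K2) j = (X i).1 (n + K2 + K1) - W (n + K2) i := by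
    rw [hYW1 (n + K2) i]; abel
  rw [hstep]
  have e3 : (X i).1 n - ((X i).1 (n + K2 + K1) - W (n + K2) i)
      = -((X i).1 (n + K2 + K1) - (X i).1 n) + W (n + K2) i := by abel
  rw [e3]
  refine add_mem (neg_mem ?_) ?_
  · exact hcauchy i n (n + K2 + K1) (by omega)
  · exact Submodule.smul_mono_left (Ideal.pow_le_pow_right (by omega)) (hYW2 (n + K2) i)

end Tensor

end AdicFlatProofAux

theorem flat_adicCompletion_of_flat_of_projective_mod
    {R : Type*} [CommRing R] [IsNoetherianRing R] (I : Ideal R) (hI : I.FG)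
    (M : Type*) [AddCommGroup M] [Module R M] [Module.Flat R M]
    (hproj : Module.Projective (R ⧸ I) ((R ⧸ I) ⊗[R] M)) :
    Module.Flat R (AdicCompletion I M) := by
  classical
  rw [Module.Flat.iff_rTensor_injective']
  intro J
  rw [← LinearMap.ker_eq_bot, LinearMap.ker_eq_bot']
  intro t ht
  obtain ⟨S, hS⟩ := TensorProduct.exists_finset t
  set e := S.equivFin with he
  set a : Fin S.card → J := fun i ↦ (e.symm i).1.1 with ha
  set x : Fin S.card → AdicCompletion I M := fun i ↦ (e.symm i).1.2 with hxx
  have htS : t = ∑ i, (a i : J) ⊗ₜ[R] x i := by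
    rw [hS, ← Finset.sum_attach S (fun q ↦ q.1 ⊗ₜ[R] q.2), ← Finset.univ_eq_attach,
      ← Equiv.sum_comp e.symm (fun p : {z // z ∈ S} ↦ p.1.1 ⊗ₜ[R] p.1.2)]
  have hrel : ∑ i, ((a i : R)) • x i = 0 := by
    have h2 : TensorProduct.lid R (AdicCompletion I M)
        ((LinearMap.rTensor (AdicCompletion I M) J.subtype) t) = 0 := by
      rw [ht, map_zero]
    rw [htS, map_sum, map_sum] at h2
    simpa using h2
  obtain ⟨c, k, y, hker, hrep⟩ := AdicFlatProofAux.key I (fun i ↦ ((a i : R))) x hrel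
  have hterm : ∀ i, (a i : J) ⊗ₜ[R] x i = ∑ j, (k j i • a i) ⊗ₜ[R] y j := by
    intro i
    rw [hrep i, tmul_sum]
    apply Finset.sum_congr rfl
    intro j _
    rw [tmul_smul, smul_tmul']
  have hz : ∀ j, ∑ i, (k j i • a i) ⊗ₜ[R] y j = 0 := by
    intro j
    rw [← TensorProduct.sum_tmul]
    have hzero : (∑ i, k j i • a i) = (0 : J) := by
      apply Submodule.injective_subtype J
      rw [map_sum, map_zero]
      rw [← hker j]
      apply Finset.sum_congr rfl
      intro i _
      rw [map_smul, Submodule.coe_subtype, smul_eq_mul, mul_comm]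
    rw [hzero, TensorProduct.zero_tmul]
  rw [htS]
  calc ∑ i, ((a i : J) ⊗ₜ[R] x i)
      = ∑ i, ∑ j, (k j i • a i) ⊗ₜ[R] y j :=
        Finset.sum_congr rfl (fun i _ ↦ hterm i)
    _ = ∑ j, ∑ i, (k j i • a i) ⊗ₜ[R] y j := Finset.sum_comm
    _ = 0 := by
        rw [Finset.sum_congr rfl (fun j _ ↦ hz j)]
        simp
end

section
/- Let R be a Noetherian commutative ring and I ⊆ R an ideal. Then the I-adic completion of any free R-module is a flat R-module. -/
open LinearMap

namespace AdicFlatAux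

variable {R : Type*} [CommRing R] (I : Ideal R)

/-- Transfer a uniform Artin-Rees property along a family of "coordinate" maps. -/
theorem ar_transfer {A B : Type*} [AddCommGroup A] [Module R A] [AddCommGroup B] [Module R B]
    {ι₀ : Type*} (Φ : ι₀ → B →ₗ[R] A) (Ψ : ι₀ → A →ₗ[R] B)
    (hdecomp : ∀ x : B, ∃ T : Finset ι₀, ∑ i ∈ T, Ψ i (Φ i x) = x)
    {WA : Submodule R A} {WB : Submodule R B}
    (hΦ : ∀ i, WB.map (Φ i) ≤ WA) (hΨ : ∀ i, WA.map (Ψ i) ≤ WB)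
    {c : ℕ}
    (hc : ∀ n ≥ c, (I ^ n • ⊤ : Submodule R A) ⊓ WA
      = I ^ (n - c) • ((I ^ c • ⊤ : Submodule R A) ⊓ WA)) :
    ∀ n ≥ c, (I ^ n • ⊤ : Submodule R B) ⊓ WB
      = I ^ (n - c) • ((I ^ c • ⊤ : Submodule R B) ⊓ WB) := by
  intro n hn
  apply le_antisymm
  · rintro x hx
    rw [Submodule.mem_inf] at hx
    obtain ⟨hx1, hx2⟩ := hx
    obtain ⟨T, hT⟩ := hdecomp x
    rw [← hT]
    refine Submodule.sum_mem _ (fun i _ ↦ ?_)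
    have h1 : Φ i x ∈ (I ^ n • ⊤ : Submodule R A) ⊓ WA := by
      rw [Submodule.mem_inf]
      constructor
      · have hle : Submodule.map (Φ i) (I ^ n • ⊤ : Submodule R B)
            ≤ (I ^ n • ⊤ : Submodule R A) := by
          rw [Submodule.map_smul'']
          exact smul_mono_right _ le_top
        exact hle ⟨x, hx1, rfl⟩
      · exact hΦ i ⟨x, hx2, rfl⟩
    rw [hc n hn] at h1
    have h2 : Ψ i (Φ i x) ∈ Submodule.map (Ψ i)
        (I ^ (n - c) • ((I ^ c • ⊤ : Submodule R A) ⊓ WA)) :=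
      Submodule.mem_map_of_mem h1
    rw [Submodule.map_smul''] at h2
    refine Submodule.smul_mono le_rfl ?_ h2
    refine le_trans (Submodule.map_inf_le _) (inf_le_inf ?_ (hΨ i))
    rw [Submodule.map_smul'']
    exact smul_mono_right _ le_top
  · refine le_inf ?_ ((smul_mono_right _ inf_le_right).trans Submodule.smul_le_right)
    refine (smul_mono_right _ inf_le_left).trans ?_
    rw [← Submodule.smul_assoc, smul_eq_mul, ← pow_add, Nat.sub_add_cancel hn]

theorem mem_pi_smul_top {ι : Type*} [Fintype ι] {F : Type*} [AddCommGroup F] [Module R F]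
    (J : Ideal R) (v : ι → F) :
    v ∈ (J • ⊤ : Submodule R (ι → F)) ↔ ∀ t, v t ∈ (J • ⊤ : Submodule R F) := by
  classical
  constructor
  · intro h t
    have hle : Submodule.map (LinearMap.proj t : (ι → F) →ₗ[R] F) (J • ⊤)
        ≤ (J • ⊤ : Submodule R F) := by
      rw [Submodule.map_smul'']
      exact smul_mono_right _ le_top
    exact hle ⟨v, h, rfl⟩
  · intro h
    have hv : v = ∑ t, Pi.single t (v t) := (Finset.univ_sum_single v).symm
    rw [hv]
    refine Submodule.sum_mem _ (fun t _ ↦ ?_)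
    have hle : Submodule.map (LinearMap.single R (fun _ : ι ↦ F) t) (J • ⊤)
        ≤ (J • ⊤ : Submodule R (ι → F)) := by
      rw [Submodule.map_smul'']
      exact smul_mono_right _ le_top
    exact hle ⟨v t, h t, rfl⟩

namespace Core

variable {I}

theorem basis_sum_repr {F : Type*} [AddCommGroup F] [Module R F] {ι₀ : Type*} (b : Module.Basis ι₀ R F)
    (x : F) (T : Finset ι₀) (hT : (b.repr x).support ⊆ T) :
    ∑ i ∈ T, b.repr x i • b i = x := by
  have h := b.linearCombination_repr x
  rw [Finsupp.linearCombination_apply, Finsupp.sum] at h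
  calc ∑ i ∈ T, b.repr x i • b i
      = ∑ i ∈ (b.repr x).support, b.repr x i • b i :=
        (Finset.sum_subset hT (fun i _ hi ↦ by
          rw [Finsupp.notMem_support_iff.mp hi, zero_smul])).symm
    _ = x := h

variable [IsNoetherianRing R]
variable {F : Type*} [AddCommGroup F] [Module R F] [Module.Free R F]
variable {m : ℕ}

theorem core (I : Ideal R) (g : Fin m → R) (x : Fin m → AdicCompletion I F)
    (hx : ∑ t, g t • x t = 0) :
    ∃ (s : ℕ) (kk : Fin s → Fin m → R) (Y : Fin s → AdicCompletion I F),
      (∀ j, ∑ t, g t * kk j t = 0) ∧ (∀ t, x t = ∑ j, kk j t • Y j) := by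
  classical
  let b := Module.Free.chooseBasis R F
  set ι₀ := Module.Free.ChooseBasisIndex R F with hι₀
  -- the relation map on R and on F
  set π : (Fin m → R) →ₗ[R] R := ∑ t, g t • LinearMap.proj t with hπ
  have hπ_apply : ∀ r : Fin m → R, π r = ∑ t, g t * r t := by
    intro r; simp [hπ, LinearMap.sum_apply]
  obtain ⟨s, kk, hkk⟩ := Submodule.fg_iff_exists_fin_generating_family.mp
    (IsNoetherian.noetherian (LinearMap.ker π))
  have hkkmem : ∀ j, ∑ t, g t * kk j t = 0 := by
    intro j
    have h1 : kk j ∈ LinearMap.ker π := by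
      rw [← hkk]; exact Submodule.subset_span (Set.mem_range_self j)
    rw [LinearMap.mem_ker, hπ_apply] at h1
    exact h1
  set gF : (Fin m → F) →ₗ[R] F := ∑ t, g t • LinearMap.proj t with hgF
  have hgF_apply : ∀ v : Fin m → F, gF v = ∑ t, g t • v t := by
    intro v; simp [hgF, LinearMap.sum_apply]
  set hF : (Fin s → F) →ₗ[R] (Fin m → F) :=
    LinearMap.pi (fun t ↦ ∑ j, kk j t • LinearMap.proj j) with hhF
  have hhF_apply : ∀ (y : Fin s → F) (t : Fin m), hF y t = ∑ j, kk j t • y j := by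
    intro y t; simp [hhF, LinearMap.sum_apply]
  set hR : (Fin s → R) →ₗ[R] (Fin m → R) :=
    LinearMap.pi (fun t ↦ ∑ j, kk j t • LinearMap.proj j) with hhR
  have hhR_apply : ∀ (y : Fin s → R) (t : Fin m), hR y t = ∑ j, kk j t • y j := by
    intro y t; simp [hhR, LinearMap.sum_apply]
  -- Claim A: every relation over F is in the range of hF
  have claimA : ∀ v : Fin m → F, gF v = 0 → ∃ y : Fin s → F, hF y = v := by
    intro v hv
    have hwK : ∀ i : ι₀, (fun t : Fin m ↦ b.repr (v t) i) ∈ LinearMap.ker π := by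
      intro i
      rw [LinearMap.mem_ker, hπ_apply]
      have : b.repr (∑ t, g t • v t) i = 0 := by
        rw [← hgF_apply, hv]; simp
      rw [map_sum] at this
      simpa [Finsupp.smul_apply, smul_eq_mul] using this
    have hwK' : ∀ i : ι₀, (fun t : Fin m ↦ b.repr (v t) i) ∈ Submodule.span R (Set.range kk) := by
      intro i; rw [hkk]; exact hwK i
    choose cc hcc using fun i ↦ (Submodule.mem_span_range_iff_exists_fun R).mp (hwK' i)
    set T : Finset ι₀ := Finset.univ.biUnion (fun t : Fin m ↦ (b.repr (v t)).support) with hT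
    refine ⟨fun j ↦ ∑ i ∈ T, cc i j • b i, ?_⟩
    funext t
    rw [hhF_apply]
    calc ∑ j, kk j t • ∑ i ∈ T, cc i j • b i
        = ∑ i ∈ T, (∑ j, cc i j * kk j t) • b i := by
          simp_rw [Finset.smul_sum, smul_smul]
          rw [Finset.sum_comm]
          refine Finset.sum_congr rfl (fun i _ ↦ ?_)
          rw [Finset.sum_smul]
          exact Finset.sum_congr rfl (fun j _ ↦ by rw [mul_comm])
      _ = ∑ i ∈ T, b.repr (v t) i • b i := by
          refine Finset.sum_congr rfl (fun i _ ↦ ?_)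
          have := congrFun (hcc i) t
          simp only [Finset.sum_apply, Pi.smul_apply, smul_eq_mul] at this
          rw [this]
      _ = v t := basis_sum_repr b (v t) T (by
          intro i hi
          rw [hT]
          exact Finset.mem_biUnion.mpr ⟨t, Finset.mem_univ t, hi⟩)
  -- Artin-Rees constants on the R-level (finite modules) and their transfer to F
  obtain ⟨c1, hc1⟩ := Ideal.exists_pow_inf_eq_pow_smul I (LinearMap.range hR)
  obtain ⟨c2, hc2⟩ := Ideal.exists_pow_inf_eq_pow_smul I (LinearMap.range π)
  set Φ1 : ι₀ → (Fin m → F) →ₗ[R] (Fin m → R) :=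
    fun i ↦ LinearMap.pi (fun t ↦ (b.coord i) ∘ₗ LinearMap.proj t) with hΦ1def
  set Ψ1 : ι₀ → (Fin m → R) →ₗ[R] (Fin m → F) :=
    fun i ↦ LinearMap.pi
      (fun t ↦ (LinearMap.toSpanSingleton R F (b i)) ∘ₗ LinearMap.proj t) with hΨ1def
  have hΦ1_apply : ∀ i v t, Φ1 i v t = b.repr (v t) i := by intro i v t; simp [hΦ1def]
  have hΨ1_apply : ∀ i r t, Ψ1 i r t = r t • b i := by intro i r t; simp [hΨ1def]
  have hAR1 : ∀ n ≥ c1, (I ^ n • ⊤ : Submodule R (Fin m → F)) ⊓ LinearMap.range hF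
      = I ^ (n - c1) • ((I ^ c1 • ⊤ : Submodule R (Fin m → F)) ⊓ LinearMap.range hF) := by
    refine ar_transfer I Φ1 Ψ1 ?_ ?_ ?_ hc1
    · intro v
      refine ⟨Finset.univ.biUnion (fun t : Fin m ↦ (b.repr (v t)).support), ?_⟩
      funext t
      rw [Finset.sum_apply]
      simp_rw [hΨ1_apply, hΦ1_apply]
      exact basis_sum_repr b (v t) _ (fun i hi ↦
        Finset.mem_biUnion.mpr ⟨t, Finset.mem_univ t, hi⟩)
    · rintro i _ ⟨_, ⟨y, rfl⟩, rfl⟩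
      refine ⟨fun j ↦ b.repr (y j) i, ?_⟩
      funext t
      simp only [hhR_apply, hΦ1_apply, hhF_apply, map_sum, Finsupp.finset_sum_apply,
        map_smul, Finsupp.smul_apply]
    · rintro i _ ⟨_, ⟨r, rfl⟩, rfl⟩
      refine ⟨fun j ↦ r j • b i, ?_⟩
      funext t
      rw [hhF_apply, hΨ1_apply, hhR_apply, Finset.sum_smul]
      refine Finset.sum_congr rfl (fun j _ ↦ ?_)
      rw [smul_smul, smul_eq_mul]
  have hAR2 : ∀ n ≥ c2, (I ^ n • ⊤ : Submodule R F) ⊓ LinearMap.range gF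
      = I ^ (n - c2) • ((I ^ c2 • ⊤ : Submodule R F) ⊓ LinearMap.range gF) := by
    refine ar_transfer I (fun i ↦ b.coord i)
      (fun i ↦ LinearMap.toSpanSingleton R F (b i)) ?_ ?_ ?_ hc2
    · intro w
      exact ⟨(b.repr w).support, by
        simpa using basis_sum_repr b w (b.repr w).support (fun i hi ↦ hi)⟩
    · rintro i _ ⟨_, ⟨v, rfl⟩, rfl⟩
      refine ⟨fun t ↦ b.repr (v t) i, ?_⟩
      rw [hπ_apply]
      simp only [Module.Basis.coord_apply]
      simp only [hgF_apply, map_sum, Finsupp.finset_sum_apply, map_smul,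
        Finsupp.smul_apply, smul_eq_mul]
    · rintro i _ ⟨_, ⟨r, rfl⟩, rfl⟩
      refine ⟨fun t ↦ r t • b i, ?_⟩
      rw [hgF_apply, LinearMap.toSpanSingleton_apply, hπ_apply, Finset.sum_smul]
      exact Finset.sum_congr rfl (fun t _ ↦ smul_smul (g t) (r t) (b i))
  -- push smul through ranges
  have hmapg : ∀ a : ℕ, I ^ a • LinearMap.range gF
      = Submodule.map gF (I ^ a • ⊤ : Submodule R (Fin m → F)) := by
    intro a; rw [Submodule.map_smul'', Submodule.map_top]
  have hmaph : ∀ a : ℕ, I ^ a • LinearMap.range hF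
      = Submodule.map hF (I ^ a • ⊤ : Submodule R (Fin s → F)) := by
    intro a; rw [Submodule.map_smul'', Submodule.map_top]
  -- lifting small elements
  have L1 : ∀ (n : ℕ) (v : Fin m → F), gF v ∈ (I ^ (n + c2) • ⊤ : Submodule R F) →
      ∃ dd : Fin m → F, dd ∈ (I ^ n • ⊤ : Submodule R (Fin m → F)) ∧ gF dd = gF v := by
    intro n v hv
    have h1 : gF v ∈ (I ^ (n + c2) • ⊤ : Submodule R F) ⊓ LinearMap.range gF :=
      Submodule.mem_inf.mpr ⟨hv, ⟨v, rfl⟩⟩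
    rw [hAR2 (n + c2) (by omega), Nat.add_sub_cancel] at h1
    have h2 := Submodule.smul_mono le_rfl inf_le_right h1
    rw [hmapg n] at h2
    obtain ⟨dd, hdd, hgd⟩ := h2
    exact ⟨dd, hdd, hgd⟩
  have L2 : ∀ (n : ℕ) (w : Fin m → F), w ∈ (I ^ (n + c1) • ⊤ : Submodule R (Fin m → F)) →
      w ∈ LinearMap.range hF →
      ∃ uu : Fin s → F, uu ∈ (I ^ n • ⊤ : Submodule R (Fin s → F)) ∧ hF uu = w := by
    intro n w hw hwr
    have h1 : w ∈ (I ^ (n + c1) • ⊤ : Submodule R (Fin m → F)) ⊓ LinearMap.range hF :=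
      Submodule.mem_inf.mpr ⟨hw, hwr⟩
    rw [hAR1 (n + c1) (by omega), Nat.add_sub_cancel] at h1
    have h2 := Submodule.smul_mono le_rfl inf_le_right h1
    rw [hmaph n] at h2
    obtain ⟨uu, huu, hgu⟩ := h2
    exact ⟨uu, huu, hgu⟩
  -- choose representing Cauchy sequences
  choose χ hχ using fun t ↦ AdicCompletion.mk_surjective I F (x t)
  set X : ℕ → Fin m → F := fun n t ↦ χ t n with hXdef
  have hXc : ∀ {a n : ℕ}, a ≤ n → X n - X a ∈ (I ^ a • ⊤ : Submodule R (Fin m → F)) := by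
    intro a n han
    rw [mem_pi_smul_top]
    intro t
    have h1 := (χ t).property han
    rw [SModEq.sub_mem] at h1
    simpa [hXdef] using Submodule.neg_mem _ h1
  have hker : ∀ n, gF (X n) ∈ (I ^ n • ⊤ : Submodule R F) := by
    intro n
    have h0 : (∑ t, g t • x t).val n = 0 := by rw [hx]; rfl
    rw [AdicCompletion.val_sum_apply] at h0
    have h1 : ∀ t, (g t • x t).val n
        = Submodule.mkQ (I ^ n • ⊤ : Submodule R F) (g t • χ t n) := by
      intro t
      rw [AdicCompletion.val_smul, ← hχ t]
      simp
    rw [Finset.sum_congr rfl (fun t _ ↦ h1 t), ← map_sum] at h0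
    rw [hgF_apply]
    rw [Submodule.mkQ_apply, Submodule.Quotient.mk_eq_zero] at h0
    exact h0
  set k : ℕ := c1 + c2 with hk
  have hzd : ∀ n : ℕ, ∃ (zz : Fin s → F) (dd : Fin m → F),
      dd ∈ (I ^ (c1 + n) • ⊤ : Submodule R (Fin m → F)) ∧ hF zz = X (k + n) - dd := by
    intro n
    have h1 : gF (X (k + n)) ∈ (I ^ ((c1 + n) + c2) • ⊤ : Submodule R F) := by
      have he : (c1 + n) + c2 = k + n := by omega
      rw [he]; exact hker (k + n)
    obtain ⟨dd, hdd, hgd⟩ := L1 (c1 + n) (X (k + n)) h1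
    have h2 : gF (X (k + n) - dd) = 0 := by rw [map_sub, hgd, sub_self]
    obtain ⟨zz, hzz⟩ := claimA _ h2
    exact ⟨zz, dd, hdd, hzz⟩
  choose z d hd hz using hzd
  have hu : ∀ n : ℕ, ∃ uu : Fin s → F, uu ∈ (I ^ n • ⊤ : Submodule R (Fin s → F)) ∧
      hF uu = hF (z (n + 1)) - hF (z n) := by
    intro n
    refine L2 n _ ?_ ⟨z (n + 1) - z n, by rw [map_sub]⟩
    rw [hz (n + 1), hz n]
    have heq : X (k + (n + 1)) - d (n + 1) - (X (k + n) - d n)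
        = (X (k + (n + 1)) - X (k + n)) - d (n + 1) + d n := by abel
    rw [heq]
    refine Submodule.add_mem _ (Submodule.sub_mem _ ?_ ?_) ?_
    · exact Submodule.smul_mono_left (Ideal.pow_le_pow_right (by omega)) (hXc (by omega))
    · exact Submodule.smul_mono_left (Ideal.pow_le_pow_right (by omega)) (hd (n + 1))
    · have h5 := hd n
      rwa [Nat.add_comm] at h5
  choose u hu1 hu2 using hu
  set y : ℕ → Fin s → F := fun n ↦ z 0 + ∑ l ∈ Finset.range n, u l with hy
  have hyd : ∀ n, y (n + 1) - y n = u n := by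
    intro n
    rw [hy]
    simp only [Finset.sum_range_succ]
    abel
  have hFy : ∀ n, hF (y n) = hF (z n) := by
    intro n
    rw [hy]
    simp only [map_add, map_sum]
    rw [Finset.sum_congr rfl (fun l _ ↦ hu2 l), Finset.sum_range_sub (fun l ↦ hF (z l))]
    abel
  have hyc : ∀ (j : Fin s) (n : ℕ),
      y n j ≡ y (n + 1) j [SMOD (I ^ n • ⊤ : Submodule R F)] := by
    intro j n
    rw [SModEq.sub_mem]
    have h1 : y (n + 1) - y n ∈ (I ^ n • ⊤ : Submodule R (Fin s → F)) := by
      rw [hyd n]; exact hu1 n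
    rw [mem_pi_smul_top] at h1
    simpa using Submodule.neg_mem _ (h1 j)
  refine ⟨s, kk, fun j ↦
    AdicCompletion.mk I F (AdicCompletion.AdicCauchySequence.mk I F (fun n ↦ y n j) (hyc j)),
    hkkmem, ?_⟩
  intro t
  ext n
  rw [AdicCompletion.val_sum_apply]
  have hR1 : ∀ j : Fin s, (kk j t •
      AdicCompletion.mk I F (AdicCompletion.AdicCauchySequence.mk I F (fun n ↦ y n j) (hyc j))).val n
      = Submodule.mkQ (I ^ n • ⊤ : Submodule R F) (kk j t • y n j) := by
    intro j
    rw [AdicCompletion.val_smul]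
    simp
  rw [Finset.sum_congr rfl (fun j _ ↦ hR1 j), ← map_sum]
  have hL : (x t).val n = Submodule.mkQ (I ^ n • ⊤ : Submodule R F) (χ t n) := by
    rw [← hχ t]; simp
  rw [hL, Submodule.mkQ_apply, Submodule.mkQ_apply, Submodule.Quotient.eq]
  have hsum : ∑ j, kk j t • y n j = hF (y n) t := (hhF_apply (y n) t).symm
  rw [hsum]
  have h1 : hF (y n) - X (k + n) ∈ (I ^ n • ⊤ : Submodule R (Fin m → F)) := by
    rw [hFy n, hz n]
    have he : X (k + n) - d n - X (k + n) = -(d n) := by abel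
    rw [he]
    exact Submodule.neg_mem _
      (Submodule.smul_mono_left (Ideal.pow_le_pow_right (by omega)) (hd n))
  rw [mem_pi_smul_top] at h1
  have h1t : hF (y n) t - X (k + n) t ∈ (I ^ n • ⊤ : Submodule R F) := by
    simpa using h1 t
  have h2 : X (k + n) t - χ t n ∈ (I ^ n • ⊤ : Submodule R F) := by
    have h3 := (χ t).property (show n ≤ k + n by omega)
    rw [SModEq.sub_mem] at h3
    simpa [hXdef] using Submodule.neg_mem _ h3
  have h4 := Submodule.add_mem _ h1t h2
  rw [sub_add_sub_cancel] at h4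
  simpa [neg_sub] using Submodule.neg_mem _ h4

end Core

end AdicFlatAux

theorem flat_adicCompletion_of_free
    {R : Type*} [CommRing R] [IsNoetherianRing R] (I : Ideal R)
    (F : Type*) [AddCommGroup F] [Module R F] [Module.Free R F] :
    Module.Flat R (AdicCompletion I F) := by
  classical
  rw [Module.Flat.iff_rTensor_injective']
  intro J
  rw [injective_iff_map_eq_zero]
  intro z hz
  obtain ⟨S, hS⟩ := TensorProduct.exists_finset z
  rw [hS] at hz ⊢
  set m := Fintype.card {p // p ∈ S} with hm
  set e : {p // p ∈ S} ≃ Fin m := Fintype.equivFin {p // p ∈ S} with he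
  have h0 : ∑ p ∈ S, ((p.1 : R) • p.2 : AdicCompletion I F) = 0 := by
    have h1 := congrArg (TensorProduct.lid R (AdicCompletion I F)) hz
    simpa [map_sum] using h1
  have hrel : ∑ a : Fin m, ((e.symm a).1.1 : R) • (e.symm a).1.2 = 0 := by
    rw [Equiv.sum_comp e.symm (fun p : {p // p ∈ S} ↦ ((p.1.1 : R) • p.1.2 : AdicCompletion I F))]
    rw [Finset.univ_eq_attach, Finset.sum_attach S (fun p ↦ ((p.1 : R) • p.2 : AdicCompletion I F))]
    exact h0
  obtain ⟨s, kk, Y, h1, h2⟩ := AdicFlatAux.Core.core I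
    (fun a : Fin m ↦ ((e.symm a).1.1 : R)) (fun a ↦ (e.symm a).1.2) hrel
  calc ∑ p ∈ S, p.1 ⊗ₜ[R] p.2
      = ∑ p ∈ S.attach, p.1.1 ⊗ₜ[R] p.1.2 := (Finset.sum_attach S _).symm
    _ = ∑ a : Fin m, (e.symm a).1.1 ⊗ₜ[R] (e.symm a).1.2 := by
        rw [← Finset.univ_eq_attach,
          Equiv.sum_comp e.symm (fun p : {p // p ∈ S} ↦ p.1.1 ⊗ₜ[R] p.1.2)]
    _ = ∑ a : Fin m, (e.symm a).1.1 ⊗ₜ[R] (∑ j, kk j a • Y j) := by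
        exact Finset.sum_congr rfl (fun a _ ↦ by rw [← h2 a])
    _ = ∑ a : Fin m, ∑ j, (kk j a • (e.symm a).1.1) ⊗ₜ[R] Y j := by
        refine Finset.sum_congr rfl (fun a _ ↦ ?_)
        rw [TensorProduct.tmul_sum]
        refine Finset.sum_congr rfl (fun j _ ↦ ?_)
        rw [TensorProduct.smul_tmul]
    _ = ∑ j, (∑ a : Fin m, kk j a • (e.symm a).1.1) ⊗ₜ[R] Y j := by
        rw [Finset.sum_comm]
        exact Finset.sum_congr rfl (fun j _ ↦ (TensorProduct.sum_tmul _ _ _).symm)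
    _ = 0 := by
        refine Finset.sum_eq_zero (fun j _ ↦ ?_)
        have hzero : (∑ a : Fin m, kk j a • (e.symm a).1.1 : J) = 0 := by
          ext
          push_cast [SetLike.val_smul]
          have hcomm : ∑ a : Fin m, kk j a * ((e.symm a).1.1 : R)
              = ∑ a : Fin m, ((e.symm a).1.1 : R) * kk j a :=
            Finset.sum_congr rfl (fun a _ ↦ mul_comm _ _)
          simp_rw [smul_eq_mul]
          rw [hcomm]
          exact h1 j
        rw [hzero, TensorProduct.zero_tmul]
end

section
/- Let R be a Noetherian commutative ring. Then any (possibly infinite) product of copies of R is a flat R-module. -/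
open TensorProduct LinearMap Function

section aux

variable {R : Type*} [CommRing R] (ι : Type*)

/-- Naturality of `piScalarRightHom`. -/
private lemma piScalarRightHom_natural {N N' : Type*} [AddCommGroup N] [Module R N]
    [AddCommGroup N'] [Module R N'] (f : N →ₗ[R] N') :
    (LinearMap.compLeft f ι) ∘ₗ TensorProduct.piScalarRightHom R R N ι
      = TensorProduct.piScalarRightHom R R N' ι ∘ₗ LinearMap.rTensor (ι → R) f := by
  apply TensorProduct.ext'
  intro x a
  funext j
  simp

private noncomputable def psi (κ : Type*) [Fintype κ] [DecidableEq κ] :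
    (ι → κ → R) →ₗ[R] (κ → R) ⊗[R] (ι → R) where
  toFun F := ∑ k, Pi.single k (1 : R) ⊗ₜ[R] (fun j => F j k)
  map_add' F G := by
    show (∑ k, Pi.single k (1 : R) ⊗ₜ[R] (fun j => (F + G) j k)) = _
    rw [← Finset.sum_add_distrib]
    refine Finset.sum_congr rfl fun k _ => ?_
    rw [← tmul_add]
    rfl
  map_smul' c F := by
    show (∑ k, Pi.single k (1 : R) ⊗ₜ[R] (fun j => (c • F) j k)) = _
    rw [RingHom.id_apply, Finset.smul_sum]
    refine Finset.sum_congr rfl fun k _ => ?_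
    rw [← tmul_smul]
    rfl

private lemma psi_comp (κ : Type*) [Fintype κ] [DecidableEq κ] :
    (psi ι κ) ∘ₗ TensorProduct.piScalarRightHom R R (κ → R) ι = LinearMap.id := by
  apply TensorProduct.ext'
  intro x a
  simp only [coe_comp, Function.comp_apply, TensorProduct.piScalarRightHom_tmul, id_coe, id_eq]
  show ∑ k, Pi.single k (1 : R) ⊗ₜ[R] (fun j => (a j • x) k) = x ⊗ₜ[R] a
  have h : ∀ k : κ, (Pi.single k (1 : R) ⊗ₜ[R] (fun j => (a j • x) k))
      = (Pi.single k (x k) : κ → R) ⊗ₜ[R] a := by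
    intro k
    have hk : (fun j => (a j • x) k) = x k • a := by
      funext j; simp [mul_comm]
    rw [hk, tmul_smul, smul_tmul']
    congr 1
    funext l
    simp [Pi.single_apply]
  rw [Finset.sum_congr rfl (fun k _ => h k), ← sum_tmul, Finset.univ_sum_single]

private lemma comp_psi (κ : Type*) [Fintype κ] [DecidableEq κ] :
    TensorProduct.piScalarRightHom R R (κ → R) ι ∘ₗ (psi ι κ) = LinearMap.id := by
  apply LinearMap.ext
  intro F
  show TensorProduct.piScalarRightHom R R (κ → R) ι
      (∑ k, Pi.single k (1 : R) ⊗ₜ[R] (fun j => F j k)) = F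
  rw [map_sum]
  funext j
  rw [Finset.sum_apply]
  simp only [TensorProduct.piScalarRightHom_tmul]
  have h : ∀ k : κ, (F j k • (Pi.single k (1 : R) : κ → R)) = Pi.single k (F j k) := by
    intro k
    funext l
    simp [Pi.single_apply]
  calc (∑ k, F j k • (Pi.single k (1:R) : κ → R)) = ∑ k, Pi.single k (F j k) :=
        Finset.sum_congr rfl (fun k _ => h k)
    _ = F j := Finset.univ_sum_single _

private lemma injective_piScalarRightHom_free (κ : Type*) [Fintype κ] [DecidableEq κ] :
    Function.Injective (TensorProduct.piScalarRightHom R R (κ → R) ι) := by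
  have h : Function.LeftInverse (psi ι κ)
      (TensorProduct.piScalarRightHom R R (κ → R) ι) := fun x => by
    simpa using LinearMap.congr_fun (psi_comp ι κ (R := R)) x
  exact h.injective

private lemma surjective_piScalarRightHom_free (κ : Type*) [Fintype κ] [DecidableEq κ] :
    Function.Surjective (TensorProduct.piScalarRightHom R R (κ → R) ι) := by
  have h : Function.RightInverse (psi ι κ)
      (TensorProduct.piScalarRightHom R R (κ → R) ι) := fun F => by
    simpa using LinearMap.congr_fun (comp_psi ι κ (R := R)) F
  exact h.surjective

/-- Key lemma: over a Noetherian ring, `piScalarRightHom` is injective for finitely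
generated modules. -/
private lemma injective_piScalarRightHom_of_finite [IsNoetherianRing R]
    (N : Type*) [AddCommGroup N] [Module R N] [Module.Finite R N] :
    Function.Injective (TensorProduct.piScalarRightHom R R N ι) := by
  classical
  obtain ⟨n, p, hp⟩ := Module.Finite.exists_fin' R N
  have : Module.Finite R (LinearMap.ker p) := by
    rw [Module.Finite.iff_fg]
    exact IsNoetherian.noetherian _
  obtain ⟨m, q, hq⟩ := Module.Finite.exists_fin' R (LinearMap.ker p)
  set g : (Fin m → R) →ₗ[R] (Fin n → R) := (LinearMap.ker p).subtype ∘ₗ q with hg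
  have hrange : LinearMap.range g = LinearMap.ker p := by
    rw [hg, LinearMap.range_comp, LinearMap.range_eq_top.mpr hq, Submodule.map_top,
      Submodule.range_subtype]
  rw [injective_iff_map_eq_zero]
  intro z hz
  obtain ⟨w, rfl⟩ := LinearMap.rTensor_surjective (ι → R) hp z
  have hnatp := LinearMap.congr_fun (piScalarRightHom_natural ι (R := R) p) w
  simp only [coe_comp, Function.comp_apply] at hnatp
  have h1 : ∀ j, p ((TensorProduct.piScalarRightHom R R (Fin n → R) ι w) j) = 0 := by
    intro j
    have := congrFun hnatp j
    simp only [LinearMap.compLeft_apply, Function.comp_apply] at this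
    rw [this, hz]
    rfl
  have h2 : ∀ j, ∃ y : Fin m → R,
      g y = (TensorProduct.piScalarRightHom R R (Fin n → R) ι w) j := by
    intro j
    have hmem : (TensorProduct.piScalarRightHom R R (Fin n → R) ι w) j ∈ LinearMap.ker p :=
      h1 j
    rw [← hrange] at hmem
    exact hmem
  choose v hv using h2
  obtain ⟨u, hu⟩ := surjective_piScalarRightHom_free ι (Fin m) (R := R) v
  have hnatg := LinearMap.congr_fun (piScalarRightHom_natural ι (R := R) g) u
  simp only [coe_comp, Function.comp_apply] at hnatg
  have hwu : LinearMap.rTensor (ι → R) g u = w := by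
    apply injective_piScalarRightHom_free ι (Fin n)
    rw [← hnatg]
    funext j
    simp only [LinearMap.compLeft_apply, Function.comp_apply, hu]
    exact hv j
  have hpg : p ∘ₗ g = 0 := by
    apply LinearMap.ext
    intro x
    have hx : g x ∈ LinearMap.ker p := by rw [← hrange]; exact ⟨x, rfl⟩
    simpa using hx
  rw [← hwu, ← LinearMap.rTensor_comp_apply, hpg]
  simp

end aux

set_option maxHeartbeats 800000 in
set_option synthInstance.maxHeartbeats 200000 in
theorem flat_pi_of_noetherian
    {R : Type*} [CommRing R] [IsNoetherianRing R] (ι : Type*) :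
    Module.Flat R (ι → R) := by
  classical
  rw [Module.Flat.iff_rTensor_injective]
  intro I hI
  have : Module.Finite R I := Module.Finite.iff_fg.mpr hI
  have hR : ∀ z : R ⊗[R] (ι → R),
      TensorProduct.piScalarRightHom R R R ι z = TensorProduct.lid R (ι → R) z := by
    intro z
    induction z with
    | zero => rw [map_zero, map_zero]
    | tmul x a => funext j; simp [mul_comm]
    | add x y hx hy => rw [map_add, map_add, hx, hy]
  have hRinj : Function.Injective (TensorProduct.piScalarRightHom R R R ι) := by
    intro x y hxy
    apply (TensorProduct.lid R (ι → R)).injective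
    rw [← hR, ← hR, hxy]
  have hnat := piScalarRightHom_natural ι (R := R) (I.subtype)
  have hsub : Function.Injective ⇑(LinearMap.compLeft (I.subtype) ι) := by
    intro f g hfg
    funext j
    apply Subtype.coe_injective
    exact congrFun hfg j
  have hcomp : Function.Injective
      (⇑(LinearMap.compLeft (I.subtype) ι) ∘ ⇑(TensorProduct.piScalarRightHom R R I ι)) :=
    hsub.comp (injective_piScalarRightHom_of_finite ι I)
  have hfun : ⇑(TensorProduct.piScalarRightHom R R R ι)
        ∘ ⇑(LinearMap.rTensor (ι → R) I.subtype)
      = ⇑(LinearMap.compLeft (I.subtype) ι) ∘ ⇑(TensorProduct.piScalarRightHom R R I ι) := by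
    rw [← LinearMap.coe_comp, ← LinearMap.coe_comp, hnat]
  rw [← hfun] at hcomp
  exact Function.Injective.of_comp hcomp
end

section
/- Faithfully flat descent for finite projectivity: let R → S be a faithfully flat map of commutative rings and M an R-module such that S ⊗_R M is a finitely generated projective S-module. Then M is a finitely generated projective R-module. -/
open TensorProduct

set_option synthInstance.maxHeartbeats 800000
set_option maxHeartbeats 1600000

lemma aux_injective_of_lTensor_injective
    {R S : Type*} [CommRing R] [CommRing S] [Algebra R S] [Module.FaithfullyFlat R S]
    {M N : Type*} [AddCommGroup M] [Module R M] [AddCommGroup N] [Module R N]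
    (f : M →ₗ[R] N) (h : Function.Injective (LinearMap.lTensor S f)) :
    Function.Injective f := by
  rw [← LinearMap.ker_eq_bot]
  have hc : f ∘ₗ (LinearMap.ker f).subtype = 0 := by ext x; exact x.2
  have hz : (LinearMap.ker f).subtype = 0 := by
    rw [Module.FaithfullyFlat.zero_iff_lTensor_zero R S]
    refine LinearMap.ext fun y => h ?_
    rw [← LinearMap.lTensor_comp_apply, hc]
    simp
  rw [eq_bot_iff]
  intro x hx
  have := congrArg (fun g => g ⟨x, hx⟩) hz
  simpa using this

lemma aux_finite_of_baseChange_finite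
    {R S : Type*} [CommRing R] [CommRing S] [Algebra R S] [Module.FaithfullyFlat R S]
    (M : Type*) [AddCommGroup M] [Module R M]
    [Module.Finite S (S ⊗[R] M)] : Module.Finite R M := by
  classical
  obtain ⟨G, hG⟩ : (⊤ : Submodule S (S ⊗[R] M)).FG := Module.Finite.fg_top
  choose rep hrep using fun x : S ⊗[R] M => TensorProduct.exists_finset x
  let T : Finset M := G.biUnion fun x => (rep x).image Prod.snd
  set N : Submodule R M := Submodule.span R (T : Set M) with hN
  have hNtop : N = ⊤ := by
    rw [← Submodule.Quotient.subsingleton_iff]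
    have : Subsingleton (S ⊗[R] (M ⧸ N)) := by
      have hsurj : Function.Surjective (N.mkQ.baseChange S) := by
        rw [LinearMap.baseChange_eq_ltensor]
        exact LinearMap.lTensor_surjective S (Submodule.mkQ_surjective N)
      have hrange : LinearMap.range (N.mkQ.baseChange S) = ⊥ := by
        rw [LinearMap.range_eq_map, ← hG, Submodule.map_span, eq_bot_iff, Submodule.span_le]
        rintro _ ⟨g, hg, rfl⟩
        have : ∀ p ∈ rep g, p.2 ∈ N := fun p hp =>
          Submodule.subset_span (Finset.mem_biUnion.mpr ⟨g, hg, Finset.mem_image_of_mem _ hp⟩)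
        rw [SetLike.mem_coe, Submodule.mem_bot, hrep g, map_sum]
        refine Finset.sum_eq_zero fun p hp => ?_
        rw [LinearMap.baseChange_tmul,
          show N.mkQ p.2 = 0 from (Submodule.Quotient.mk_eq_zero N).mpr (this p hp), tmul_zero]
      refine ⟨fun a b => ?_⟩
      obtain ⟨a, rfl⟩ := hsurj a
      obtain ⟨b, rfl⟩ := hsurj b
      have ha := hrange ▸ LinearMap.mem_range_self (N.mkQ.baseChange S) a
      have hb := hrange ▸ LinearMap.mem_range_self (N.mkQ.baseChange S) b
      rw [Submodule.mem_bot] at ha hb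
      rw [ha, hb]
    exact Module.FaithfullyFlat.lTensor_reflects_triviality R S (M ⧸ N)
  exact ⟨⟨T, hNtop⟩⟩

lemma aux_distribBaseChange_tmul {R S : Type*} [CommRing R] [CommRing S] [Algebra R S]
    (M N : Type*) [AddCommGroup M] [Module R M] [AddCommGroup N] [Module R N]
    (s : S) (m : M) (n : N) :
    AlgebraTensorModule.distribBaseChange R S M N (s ⊗ₜ (m ⊗ₜ n)) = (s ⊗ₜ m) ⊗ₜ (1 ⊗ₜ n) := by
  rw [← LinearEquiv.eq_symm_apply]
  simp [AlgebraTensorModule.distribBaseChange]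

lemma aux_flat_of_baseChange_flat
    {R S : Type*} [CommRing R] [CommRing S] [Algebra R S] [Module.FaithfullyFlat R S]
    (M : Type*) [AddCommGroup M] [Module R M]
    [Module.Flat S (S ⊗[R] M)] : Module.Flat R M := by
  rw [Module.Flat.iff_lTensor_injective']
  intro I
  apply aux_injective_of_lTensor_injective (S := S)
  let e₁ := AlgebraTensorModule.distribBaseChange R S M I
  let e₂ := AlgebraTensorModule.distribBaseChange R S M R
  let g : S ⊗[R] I →ₗ[S] S ⊗[R] R := I.subtype.baseChange S
  have hg : Function.Injective g := by
    show Function.Injective (I.subtype.baseChange S : S ⊗[R] I → S ⊗[R] R)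
    rw [LinearMap.baseChange_eq_ltensor]
    exact Module.Flat.lTensor_preserves_injective_linearMap I.subtype I.injective_subtype
  let F := LinearMap.lTensor (S ⊗[R] M) g
  have hF : Function.Injective F :=
    Module.Flat.lTensor_preserves_injective_linearMap g hg
  have key : ∀ x : S ⊗[R] (M ⊗[R] I),
      e₂ ((LinearMap.lTensor S (LinearMap.lTensor M I.subtype)) x) = F (e₁ x) := by
    intro x
    induction x using TensorProduct.induction_on with
    | zero => simp only [map_zero]
    | add a b ha hb => simp only [map_add, ha, hb]
    | tmul s y =>
      induction y using TensorProduct.induction_on with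
      | zero => simp only [tmul_zero, map_zero]
      | add a b ha hb => simp only [tmul_add, map_add, ha, hb]
      | tmul m i =>
        show e₂ (s ⊗ₜ (m ⊗ₜ I.subtype i)) = F (e₁ (s ⊗ₜ (m ⊗ₜ i)))
        rw [show e₂ (s ⊗ₜ (m ⊗ₜ I.subtype i)) = (s ⊗ₜ m) ⊗ₜ ((1:S) ⊗ₜ I.subtype i) from
          aux_distribBaseChange_tmul M R s m (I.subtype i),
          show e₁ (s ⊗ₜ (m ⊗ₜ i)) = (s ⊗ₜ m) ⊗ₜ ((1:S) ⊗ₜ i) from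
          aux_distribBaseChange_tmul M I s m i]
        simp [F, g]
  intro x y hxy
  apply e₁.injective
  apply hF
  rw [← key, ← key, hxy]

theorem finite_projective_of_faithfullyFlat_descent
    {R S : Type*} [CommRing R] [CommRing S] [Algebra R S]
    [Module.FaithfullyFlat R S]
    (M : Type*) [AddCommGroup M] [Module R M]
    [Module.Finite S (S ⊗[R] M)] [Module.Projective S (S ⊗[R] M)] :
    Module.Finite R M ∧ Module.Projective R M := by
  have hfin : Module.Finite R M := aux_finite_of_baseChange_finite (S := S) M
  have hflat : Module.Flat R M := aux_flat_of_baseChange_flat (S := S) M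
  -- finite presentation
  obtain ⟨n, p, hp⟩ := Module.Finite.exists_fin' R M
  have hfpS : Module.FinitePresentation S (S ⊗[R] M) :=
    Module.finitePresentation_of_projective S (S ⊗[R] M)
  have hpbsurj : Function.Surjective (p.baseChange S) := by
    rw [LinearMap.baseChange_eq_ltensor]
    exact LinearMap.lTensor_surjective S hp
  have hker_fg : (LinearMap.ker (p.baseChange S)).FG :=
    Module.FinitePresentation.fg_ker (p.baseChange S) hpbsurj
  -- S ⊗ ker p ≃ ker (p.baseChange S)
  let j : (LinearMap.ker p) →ₗ[R] (Fin n → R) := (LinearMap.ker p).subtype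
  have hjinj : Function.Injective (j.baseChange S) := by
    rw [LinearMap.baseChange_eq_ltensor]
    exact Module.Flat.lTensor_preserves_injective_linearMap j (LinearMap.ker p).injective_subtype
  have hexact : Function.Exact (LinearMap.lTensor S j) (LinearMap.lTensor S p) :=
    Module.Flat.lTensor_exact S (LinearMap.exact_subtype_ker_map p)
  have hrange : LinearMap.range (j.baseChange S) = LinearMap.ker (p.baseChange S) := by
    ext x
    rw [LinearMap.mem_ker, LinearMap.mem_range]
    constructor
    · rintro ⟨y, rfl⟩
      have : (LinearMap.lTensor S p) ((LinearMap.lTensor S j) y) = 0 :=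
        (hexact _).mpr ⟨y, rfl⟩
      simpa [LinearMap.baseChange_eq_ltensor] using this
    · intro hx
      have : x ∈ Set.range (LinearMap.lTensor S j) := (hexact x).mp (by
        simpa [LinearMap.baseChange_eq_ltensor] using hx)
      obtain ⟨y, hy⟩ := this
      exact ⟨y, by simpa [LinearMap.baseChange_eq_ltensor] using hy⟩
  have : Module.Finite S ↥(LinearMap.ker (p.baseChange S)) := Module.Finite.iff_fg.mpr hker_fg
  have : Module.Finite S (S ⊗[R] (LinearMap.ker p)) := by
    have e := LinearEquiv.ofInjective (j.baseChange S) hjinj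
    rw [hrange] at e
    exact Module.Finite.equiv e.symm
  have : Module.Finite R (LinearMap.ker p) := aux_finite_of_baseChange_finite (S := S) _
  have hkfg : (LinearMap.ker p).FG := Module.Finite.iff_fg.mp this
  have hfp : Module.FinitePresentation R M := Module.finitePresentation_of_surjective p hp hkfg
  refine ⟨hfin, ?_⟩
  rw [← Module.freeLocus_eq_univ_iff]
  exact Module.freeLocus_eq_univ
end

section
/- Let R be a Noetherian commutative ring, I an ideal, and M a finitely generated R-module. Then the natural map R^∧ ⊗_R M → M^∧ from the base change along the I-adic completion of R to the I-adic completion of M is an isomorphism. -/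
open TensorProduct

theorem adicCompletion_ofTensorProduct_bijective
    {R : Type*} [CommRing R] [IsNoetherianRing R] (I : Ideal R)
    (M : Type*) [AddCommGroup M] [Module R M] [Module.Finite R M] :
    Function.Bijective (AdicCompletion.ofTensorProduct I M) := by
  obtain ⟨n, f, hf⟩ := Module.Finite.exists_fin' R M
  let e : ((Fin n → R) ⧸ LinearMap.ker f) ≃ₗ[R] M := f.quotKerEquivOfSurjective hf
  have key := AdicCompletion.ofTensorProduct_bijective_of_finite_of_isNoetherian I
    ((Fin n → R) ⧸ LinearMap.ker f)
  have h := AdicCompletion.ofTensorProduct_naturality I e.toLinearMap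
  have hT : Function.Bijective (TensorProduct.AlgebraTensorModule.map
      (LinearMap.id : AdicCompletion I R →ₗ[AdicCompletion I R] AdicCompletion I R)
      e.toLinearMap) :=
    (TensorProduct.AlgebraTensorModule.congr
      (LinearEquiv.refl (AdicCompletion I R) (AdicCompletion I R)) e).bijective
  have hmap : Function.Bijective (AdicCompletion.map I e.toLinearMap) :=
    (AdicCompletion.congr I e).bijective
  have hcomp : Function.Bijective ((AdicCompletion.map I e.toLinearMap).comp
      (AdicCompletion.ofTensorProduct I ((Fin n → R) ⧸ LinearMap.ker f))) := by
    rw [LinearMap.coe_comp]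
    exact hmap.comp key
  rw [h, LinearMap.coe_comp] at hcomp
  exact (Function.Bijective.of_comp_iff _ hT).mp hcomp
end
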